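/- If the reduced gradient ∇_{gh}^k = Y_g^k − d_{gh}^k/α̃_{gh}^k + μ_g^k equals 0 for all (g,h,k), then α̃ is a fixed point of the EM update rule: applying the M-step formula to the expectations computed at α̃ returns α̃ itself. -/

import Mathlib

open scoped BigOperators

/-- if the reduced gradient
`∇_{gh}^k = Y_g^k − d_{gh}^k/α̃_{gh}^k + μ_g^k` vanishes for all `(g,h,k)` (with
`h` ranging over the states reachable from `g`), then `α̃` is a fixed point of
the EM update rule: applying the M-step formula to the expectations computed at
`α̃` returns `α̃` itself. -/
theorem reduced_gradient_zero_implies_fixed_point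
    {G H K : Type*} [Fintype G] [Fintype H] [Fintype K]
    (reach : G → Finset H)
    (αt d : G → H → K → ℝ) (Y : G → K → ℝ)
    (hαt : ∀ g k, ∀ h ∈ reach g, 0 < αt g h k ∧ αt g h k ≤ 1)
    (hd : ∀ g k, ∀ h ∈ reach g, 0 < d g h k)
    (hY : ∀ g k, 0 < Y g k)
    (μ : G → K → ℝ)
    (hμ : ∀ g k, μ g k = max 0 ((∑ h ∈ reach g, d g h k) - Y g k))
    (α : G → H → K → ℝ)
    (hα : ∀ g k, ∀ h ∈ reach g, α g h k =
      if μ g k = 0 then d g h k / Y g k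
      else d g h k / ∑ h' ∈ reach g, d g h' k)
    (hgrad : ∀ g k, ∀ h ∈ reach g, Y g k - d g h k / αt g h k + μ g k = 0) :
    ∀ g k, ∀ h ∈ reach g, α g h k = αt g h k := by
  intro g k h hh
  have hαtpos := (hαt g k h hh).1
  have hdpos := hd g k h hh
  have hgr := hgrad g k h hh
  -- d / αt = Y + μ
  have hkey : d g h k = αt g h k * (Y g k + μ g k) := by
    have h1 : d g h k / αt g h k = Y g k + μ g k := by linarith
    field_simp at h1
    linarith
  rw [hα g k h hh]
  by_cases hμ0 : μ g k = 0
  · rw [if_pos hμ0]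
    rw [hkey, hμ0, add_zero, mul_div_assoc, div_self (hY g k).ne', mul_one]
  · simp only [if_neg hμ0]
    have hμval := hμ g k
    have hμpos : 0 < μ g k := by
      rcases lt_or_eq_of_le (le_max_left 0 ((∑ h ∈ reach g, d g h k) - Y g k)) with h'|h'
      · rw [hμval]; exact h'
      · exact absurd (hμval.trans h'.symm) hμ0
    have hsum : μ g k = (∑ h ∈ reach g, d g h k) - Y g k := by
      rw [hμval, max_eq_right]
      by_contra hc
      push_neg at hc
      rw [hμval, max_eq_left (le_of_lt hc)] at hμpos
      exact lt_irrefl 0 hμpos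
    have hS : Y g k + μ g k = ∑ h ∈ reach g, d g h k := by linarith
    have hSpos : (0:ℝ) < ∑ h ∈ reach g, d g h k := by
      rw [← hS]; linarith [hY g k]
    rw [hkey, hS, mul_div_assoc, div_self hSpos.ne', mul_one]
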